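/- Let $r \in \mathbb{N}$ and let $n \ge 3r$. Let $G$ be an $r$-uniform hypergraph on vertex set $[n]$ with $\beta\binom{n}{r} \le e(G) \le (1-\beta)\binom{n}{r}$ for some $\beta \in (0, 1/2]$. Then there exists $s \in \{1,\dots,r\}$ such that $Q_s(G) \ge c_r \beta n^{r+s}$ for some constant $c_r > 0$ depending only on $r$, where $Q_s(G) = \sum_{\vec x} \left|\sum_W (-1)^{|W \cap \{x_1(-1),\dots,x_s(-1)\}|} \widehat G(W)\right|$, with the outer sum over sequences $\vec x = (x_1(-1), x_1(1), \dots, x_s(-1), x_s(1))$ of $2s$ distinct vertices, and the inner sum over $r$-sets $W$ satisfying $|W \cap \{x_i(-1), x_i(1)\}| = 1$ for every $i \in [s]$. -/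

import Mathlib

open Finset
open scoped Classical

set_option maxHeartbeats 2000000

namespace BS

variable {n : ℕ}

/-- extend a pair-system by a new pair (a = false slot, b = true slot) at position 0 -/
def ext {s : ℕ} (x : Fin s × Bool → Fin n) (a b : Fin n) : Fin (s+1) × Bool → Fin n :=
  fun p => Fin.cases (motive := fun _ => Fin n) (if p.2 then b else a) (fun i => x (i, p.2)) p.1

@[simp] lemma ext_zero {s : ℕ} (x : Fin s × Bool → Fin n) (a b : Fin n) (c : Bool) :
    ext x a b (0, c) = if c then b else a := rfl

@[simp] lemma ext_false {s : ℕ} (x : Fin s × Bool → Fin n) (a b : Fin n) :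
    ext x a b (0, false) = a := rfl

@[simp] lemma ext_true {s : ℕ} (x : Fin s × Bool → Fin n) (a b : Fin n) :
    ext x a b (0, true) = b := rfl

@[simp] lemma ext_succ {s : ℕ} (x : Fin s × Bool → Fin n) (a b : Fin n) (i : Fin s) (c : Bool) :
    ext x a b (i.succ, c) = x (i, c) := rfl

noncomputable def M (r : ℕ) (f : Finset (Fin n) → ℝ) (s : ℕ) (x : Fin s × Bool → Fin n)
    (V : Finset (Fin n)) : ℝ :=
  ∑ W ∈ ((Finset.univ : Finset (Fin n)).powersetCard r).filter (fun W =>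
      (∀ i : Fin s, (W.filter (fun w => w = x (i, false) ∨ w = x (i, true))).card = 1) ∧ V ⊆ W),
    (-1 : ℝ) ^ (W.filter (fun w => ∃ i : Fin s, w = x (i, false))).card * f W

noncomputable def cfg (n : ℕ) (s t : ℕ) : Finset ((Fin s × Bool → Fin n) × Finset (Fin n)) :=
  Finset.univ.filter (fun p =>
    Function.Injective p.1 ∧ p.2.card = t ∧ ∀ q, p.1 q ∉ p.2)

noncomputable def N (r : ℕ) (f : Finset (Fin n) → ℝ) (s t : ℕ) : ℝ :=
  ∑ p ∈ cfg n s t, |M r f s p.1 p.2|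

lemma N_nonneg (r : ℕ) (f : Finset (Fin n) → ℝ) (s t : ℕ) : 0 ≤ N r f s t :=
  Finset.sum_nonneg fun _ _ => abs_nonneg _


lemma card_inter_image {s : ℕ} {x : Fin s × Bool → Fin n} (hx : Function.Injective x)
    {W : Finset (Fin n)}
    (hW : ∀ i : Fin s, (W.filter (fun w => w = x (i, false) ∨ w = x (i, true))).card = 1) :
    (W ∩ Finset.image x Finset.univ).card = s := by
  have hset : W ∩ Finset.image x Finset.univ =
      Finset.univ.biUnion (fun i : Fin s =>
        W.filter (fun w => w = x (i, false) ∨ w = x (i, true))) := by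
    ext w
    simp only [Finset.mem_inter, Finset.mem_image, Finset.mem_biUnion, Finset.mem_filter,
      Finset.mem_univ, true_and]
    constructor
    · rintro ⟨hwW, ⟨i, c⟩, rfl⟩
      exact ⟨i, hwW, by cases c <;> simp⟩
    · rintro ⟨i, hwW, h | h⟩
      · exact ⟨hwW, (i, false), h.symm⟩
      · exact ⟨hwW, (i, true), h.symm⟩
  rw [hset, Finset.card_biUnion, Finset.sum_congr rfl (fun i _ => hW i)]
  · simp
  · intro i _ j _ hij
    rw [Function.onFun, Finset.disjoint_left]
    rintro w hw1 hw2
    simp only [Finset.mem_filter] at hw1 hw2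
    rcases hw1.2 with h1 | h1 <;> rcases hw2.2 with h2 | h2 <;>
    · have := hx (h1.symm.trans h2)
      exact hij (congrArg Prod.fst this)





lemma pair_filter_card {W : Finset (Fin n)} {a b : Fin n} (hab : a ≠ b) :
    (W.filter (fun w => w = a ∨ w = b)).card =
      (if a ∈ W then 1 else 0) + (if b ∈ W then 1 else 0) := by
  rw [Finset.filter_or, Finset.filter_eq', Finset.filter_eq']
  split_ifs with h1 h2 h2 <;> simp_all

lemma sign_filter_ext_of_not_mem {s : ℕ} (x : Fin s × Bool → Fin n) (a b : Fin n)
    {W : Finset (Fin n)} (haW : a ∉ W) :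
    W.filter (fun w => ∃ i : Fin (s+1), w = ext x a b (i, false)) =
      W.filter (fun w => ∃ i : Fin s, w = x (i, false)) := by
  apply Finset.filter_congr
  intro w hw
  have hwa : w ≠ a := fun h => haW (h ▸ hw)
  simp [Fin.exists_fin_succ, hwa]

lemma sign_filter_ext_of_mem {s : ℕ} (x : Fin s × Bool → Fin n) (a b : Fin n)
    (haX : ∀ q : Fin s × Bool, x q ≠ a) {W : Finset (Fin n)} (haW : a ∈ W) :
    (W.filter (fun w => ∃ i : Fin (s+1), w = ext x a b (i, false))).card =
      (W.filter (fun w => ∃ i : Fin s, w = x (i, false))).card + 1 := by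
  have hins : W.filter (fun w => ∃ i : Fin (s+1), w = ext x a b (i, false)) =
      insert a (W.filter (fun w => ∃ i : Fin s, w = x (i, false))) := by
    ext w
    simp only [Finset.mem_filter, Finset.mem_insert, Fin.exists_fin_succ, ext_zero, ext_succ]
    constructor
    · rintro ⟨hwW, h | h⟩
      · left; simpa using h
      · right; exact ⟨hwW, h⟩
    · rintro (rfl | ⟨hwW, h⟩)
      · exact ⟨haW, Or.inl (by simp)⟩
      · exact ⟨hwW, Or.inr h⟩
  rw [hins, Finset.card_insert_of_notMem]
  intro h
  rcases Finset.mem_filter.1 h with ⟨-, i, hi⟩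
  exact haX (i, false) hi.symm



lemma key (r : ℕ) (f : Finset (Fin n) → ℝ) {s : ℕ} {x : Fin s × Bool → Fin n}
    (hx : Function.Injective x) {V : Finset (Fin n)} {b : Fin n}
    (hbX : ∀ q, x q ≠ b) (hbV : b ∉ V) (hVx : ∀ q, x q ∉ V) :
    ∑ a ∈ Finset.univ \ (Finset.image x Finset.univ ∪ V ∪ {b}), M r f (s+1) (ext x a b) V
      = ((n:ℝ) - r - s) * M r f s x (insert b V)
        - ((r:ℝ) - s - V.card) * (M r f s x V - M r f s x (insert b V)) := by
  classical
  set X := Finset.image x Finset.univ with hXdef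
  set B := X ∪ V ∪ ({b} : Finset (Fin n)) with hBdef
  set A := Finset.univ \ B with hAdef
  have hXcard : X.card = 2 * s := by
    rw [hXdef, Finset.card_image_of_injective _ hx]
    simp [mul_comm]
  have hbXm : b ∉ X := by
    simp only [hXdef, Finset.mem_image]
    rintro ⟨q, -, hq⟩; exact hbX q hq
  have hdXV : Disjoint X V := by
    rw [Finset.disjoint_left]
    rintro w hwX hwV
    rcases Finset.mem_image.1 hwX with ⟨q, -, rfl⟩
    exact hVx q hwV
  have hBcard : B.card = 2 * s + V.card + 1 := by
    have d2 : Disjoint (X ∪ V) ({b} : Finset (Fin n)) := by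
      rw [Finset.disjoint_singleton_right]
      simp [hbXm, hbV]
    rw [hBdef, Finset.card_union_of_disjoint d2, Finset.card_union_of_disjoint hdXV,
      hXcard, Finset.card_singleton]
  have main : ∀ W ∈ (Finset.univ : Finset (Fin n)).powersetCard r,
      (∑ a ∈ A, if (∀ i : Fin (s+1),
          (W.filter (fun w => w = ext x a b (i, false) ∨ w = ext x a b (i, true))).card = 1)
          ∧ V ⊆ W then
          (-1 : ℝ) ^ (W.filter (fun w => ∃ i : Fin (s+1), w = ext x a b (i, false))).card * f W
        else 0)
      = ((n:ℝ) - r - s) *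
          (if (∀ i : Fin s,
              (W.filter (fun w => w = x (i, false) ∨ w = x (i, true))).card = 1)
              ∧ insert b V ⊆ W then
            (-1 : ℝ) ^ (W.filter (fun w => ∃ i : Fin s, w = x (i, false))).card * f W else 0)
        - ((r:ℝ) - s - V.card) *
          ((if (∀ i : Fin s,
              (W.filter (fun w => w = x (i, false) ∨ w = x (i, true))).card = 1)
              ∧ V ⊆ W then
            (-1 : ℝ) ^ (W.filter (fun w => ∃ i : Fin s, w = x (i, false))).card * f W else 0)
          - (if (∀ i : Fin s,
              (W.filter (fun w => w = x (i, false) ∨ w = x (i, true))).card = 1)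
              ∧ insert b V ⊆ W then
            (-1 : ℝ) ^ (W.filter (fun w => ∃ i : Fin s, w = x (i, false))).card * f W else 0)) := by
    intro W hWP
    have hWr : W.card = r := (Finset.mem_powersetCard.1 hWP).2
    by_cases hbase : (∀ i : Fin s,
        (W.filter (fun w => w = x (i, false) ∨ w = x (i, true))).card = 1) ∧ V ⊆ W
    · obtain ⟨hpairs, hVW⟩ := hbase
      have hWX : (W ∩ X).card = s := card_inter_image hx hpairs
      have hWV : W ∩ V = V := Finset.inter_eq_right.2 hVW
      have hAmem : ∀ a ∈ A, (∀ q, x q ≠ a) ∧ a ∉ V ∧ a ≠ b := by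
        intro a ha
        rw [hAdef, Finset.mem_sdiff, hBdef] at ha
        simp only [Finset.mem_union, Finset.mem_singleton, not_or, Finset.mem_univ,
          true_and] at ha
        obtain ⟨⟨haX, haV⟩, hab⟩ := ha
        refine ⟨fun q hq => haX ?_, haV, hab⟩
        rw [hXdef]; exact Finset.mem_image.2 ⟨q, Finset.mem_univ _, hq⟩
      by_cases hbW : b ∈ W
      · -- case b ∈ W
        have hWB : (W ∩ B).card = s + V.card + 1 := by
          have d1 : Disjoint (W ∩ X) V := hdXV.mono Finset.inter_subset_right le_rfl
          have d2 : Disjoint ((W ∩ X) ∪ V) ({b} : Finset (Fin n)) := by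
            rw [Finset.disjoint_singleton_right]
            simp [hbXm, hbV]
          rw [hBdef, Finset.inter_union_distrib_left, Finset.inter_union_distrib_left,
            hWV, Finset.inter_comm W {b}, Finset.singleton_inter_of_mem hbW,
            Finset.card_union_of_disjoint d2, Finset.card_union_of_disjoint d1, hWX,
            Finset.card_singleton]
        have hcount : ((A \ W).card : ℝ) = (n:ℝ) - r - s := by
          have hAW : A \ W = Finset.univ \ (B ∪ W) := by
            rw [hAdef]; ext w; simp only [Finset.mem_sdiff, Finset.mem_univ, true_and,
              Finset.mem_union, not_or] <;> tauto
          have e1 : (A \ W).card + (B ∪ W).card = n := by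
            rw [hAW, Finset.card_sdiff_add_card_eq_card (Finset.subset_univ _)]
            simp
          have e2 : (B ∪ W).card + (B ∩ W).card = B.card + W.card :=
            Finset.card_union_add_card_inter _ _
          have e3 : (B ∩ W).card = s + V.card + 1 := by rw [Finset.inter_comm]; exact hWB
          have hle : s + V.card + 1 ≤ r := by
            have := Finset.card_le_card (Finset.inter_subset_right (s₁ := B) (s₂ := W))
            omega
          have : (A \ W).card + r + s = n := by omega
          push_cast [← this]; ring
        have hIns : (∀ i : Fin s,
            (W.filter (fun w => w = x (i, false) ∨ w = x (i, true))).card = 1)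
            ∧ insert b V ⊆ W := ⟨hpairs, Finset.insert_subset hbW hVW⟩
        rw [if_pos hIns, if_pos (show (∀ i : Fin s,
          (W.filter (fun w => w = x (i, false) ∨ w = x (i, true))).card = 1)
          ∧ V ⊆ W from ⟨hpairs, hVW⟩)]
        have hL : ∀ a ∈ A, (if (∀ i : Fin (s+1),
            (W.filter (fun w => w = ext x a b (i, false) ∨ w = ext x a b (i, true))).card = 1)
            ∧ V ⊆ W then
            (-1 : ℝ) ^ (W.filter (fun w => ∃ i : Fin (s+1), w = ext x a b (i, false))).card * f W
          else 0)
            = if a ∈ W then 0 else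
              (-1 : ℝ) ^ (W.filter (fun w => ∃ i : Fin s, w = x (i, false))).card * f W := by
          intro a ha
          obtain ⟨haX, haV, hab⟩ := hAmem a ha
          by_cases haW : a ∈ W
          · rw [if_pos haW, if_neg]
            rintro ⟨hall, -⟩
            have h0 := hall 0
            simp only [ext_false, ext_true] at h0
            erw [pair_filter_card hab, if_pos haW, if_pos hbW] at h0
            omega
          · rw [if_neg haW, if_pos, sign_filter_ext_of_not_mem x a b haW]
            refine ⟨Fin.forall_fin_succ.2 ⟨?_, fun i => hpairs i⟩, hVW⟩
            simp only [ext_false, ext_true]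
            erw [pair_filter_card hab, if_neg haW, if_pos hbW]
        rw [Finset.sum_congr rfl hL, Finset.sum_ite, Finset.sum_const, Finset.sum_const,
          smul_zero, zero_add, ← Finset.sdiff_eq_filter, nsmul_eq_mul, hcount]
        ring
      · -- case b ∉ W
        have hWB : (W ∩ B).card = s + V.card := by
          have d1 : Disjoint (W ∩ X) V := hdXV.mono Finset.inter_subset_right le_rfl
          rw [hBdef, Finset.inter_union_distrib_left, Finset.inter_union_distrib_left,
            hWV, Finset.inter_comm W {b}, Finset.singleton_inter_of_notMem hbW,
            Finset.union_empty, Finset.card_union_of_disjoint d1, hWX]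
        have hcount : ((A ∩ W).card : ℝ) = (r:ℝ) - s - V.card := by
          have hAW : A ∩ W = W \ B := by
            rw [hAdef]; ext w; simp only [Finset.mem_inter, Finset.mem_sdiff, Finset.mem_univ,
              true_and] <;> tauto
          have e1 : (W \ B).card + (W ∩ B).card = W.card :=
            Finset.card_sdiff_add_card_inter _ _
          have hle : s + V.card ≤ r := by omega
          have : (A ∩ W).card + s + V.card = r := by rw [hAW]; omega
          push_cast [← this]; ring
        have hInsF : ¬((∀ i : Fin s,
            (W.filter (fun w => w = x (i, false) ∨ w = x (i, true))).card = 1)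
            ∧ insert b V ⊆ W) := by
          rintro ⟨-, h⟩; exact hbW (h (Finset.mem_insert_self b V))
        rw [if_neg hInsF, if_pos (show (∀ i : Fin s,
          (W.filter (fun w => w = x (i, false) ∨ w = x (i, true))).card = 1)
          ∧ V ⊆ W from ⟨hpairs, hVW⟩)]
        have hL : ∀ a ∈ A, (if (∀ i : Fin (s+1),
            (W.filter (fun w => w = ext x a b (i, false) ∨ w = ext x a b (i, true))).card = 1)
            ∧ V ⊆ W then
            (-1 : ℝ) ^ (W.filter (fun w => ∃ i : Fin (s+1), w = ext x a b (i, false))).card * f W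
          else 0)
            = if a ∈ W then
              -((-1 : ℝ) ^ (W.filter (fun w => ∃ i : Fin s, w = x (i, false))).card * f W)
              else 0 := by
          intro a ha
          obtain ⟨haX, haV, hab⟩ := hAmem a ha
          by_cases haW : a ∈ W
          · rw [if_pos haW, if_pos, sign_filter_ext_of_mem x a b haX haW, pow_succ]
            · ring
            refine ⟨Fin.forall_fin_succ.2 ⟨?_, fun i => hpairs i⟩, hVW⟩
            simp only [ext_false, ext_true]
            erw [pair_filter_card hab, if_pos haW, if_neg hbW]
          · rw [if_neg haW, if_neg]
            rintro ⟨hall, -⟩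
            have h0 := hall 0
            simp only [ext_false, ext_true] at h0
            erw [pair_filter_card hab, if_neg haW, if_neg hbW] at h0
            omega
        rw [Finset.sum_congr rfl hL, Finset.sum_ite, Finset.sum_const, Finset.sum_const,
          smul_zero, add_zero, Finset.filter_mem_eq_inter, nsmul_eq_mul, hcount]
        ring
    · -- base fails
      have hz1 : ¬((∀ i : Fin s,
          (W.filter (fun w => w = x (i, false) ∨ w = x (i, true))).card = 1)
          ∧ insert b V ⊆ W) := by
        rintro ⟨h1, h2⟩
        exact hbase ⟨h1, (Finset.subset_insert b V).trans h2⟩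
      rw [if_neg hz1, if_neg hbase, Finset.sum_eq_zero]
      · ring
      intro a ha
      rw [if_neg]
      rintro ⟨hall, hVW⟩
      exact hbase ⟨fun i => hall i.succ, hVW⟩
  calc ∑ a ∈ A, M r f (s+1) (ext x a b) V
      = ∑ a ∈ A, ∑ W ∈ (Finset.univ : Finset (Fin n)).powersetCard r,
          (if (∀ i : Fin (s+1),
            (W.filter (fun w => w = ext x a b (i, false) ∨ w = ext x a b (i, true))).card = 1)
            ∧ V ⊆ W then
            (-1 : ℝ) ^ (W.filter (fun w => ∃ i : Fin (s+1), w = ext x a b (i, false))).card * f W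
          else 0) := by
        simp only [M, Finset.sum_filter]
    _ = ∑ W ∈ (Finset.univ : Finset (Fin n)).powersetCard r, ∑ a ∈ A,
          (if (∀ i : Fin (s+1),
            (W.filter (fun w => w = ext x a b (i, false) ∨ w = ext x a b (i, true))).card = 1)
            ∧ V ⊆ W then
            (-1 : ℝ) ^ (W.filter (fun w => ∃ i : Fin (s+1), w = ext x a b (i, false))).card * f W
          else 0) := Finset.sum_comm
    _ = _ := by
        rw [Finset.sum_congr rfl main]
        simp only [M, Finset.sum_filter, mul_sub, Finset.mul_sum, Finset.sum_sub_distrib]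


lemma mem_cfg {s t : ℕ} {p : (Fin s × Bool → Fin n) × Finset (Fin n)} :
    p ∈ cfg n s t ↔ Function.Injective p.1 ∧ p.2.card = t ∧ ∀ q, p.1 q ∉ p.2 := by
  simp [cfg]

lemma ext_injective {s : ℕ} {x : Fin s × Bool → Fin n} (hx : Function.Injective x)
    {a b : Fin n} (hab : a ≠ b) (haX : ∀ q, x q ≠ a) (hbX : ∀ q, x q ≠ b) :
    Function.Injective (ext x a b) := by
  rintro ⟨i, c⟩ ⟨j, d⟩ h
  rcases Fin.eq_zero_or_eq_succ i with rfl | ⟨i', rfl⟩ <;>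
    rcases Fin.eq_zero_or_eq_succ j with rfl | ⟨j', rfl⟩
  · simp only [ext_zero] at h
    cases c <;> cases d <;> simp_all
  · simp only [ext_zero, ext_succ] at h
    cases c
    · exact absurd h.symm (haX _)
    · exact absurd h.symm (hbX _)
  · simp only [ext_zero, ext_succ] at h
    cases d
    · exact absurd h (haX _)
    · exact absurd h (hbX _)
  · simp only [ext_succ] at h
    have := hx h
    rw [Prod.ext_iff] at this ⊢
    exact ⟨congrArg Fin.succ this.1, this.2⟩

lemma restrict_ext {s : ℕ} (y : Fin (s+1) × Bool → Fin n) :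
    ext (fun p : Fin s × Bool => y (p.1.succ, p.2)) (y (0, false)) (y (0, true)) = y := by
  funext p
  obtain ⟨i, c⟩ := p
  rcases Fin.eq_zero_or_eq_succ i with rfl | ⟨i', rfl⟩
  · cases c <;> simp
  · simp

lemma stepB (r : ℕ) (f : Finset (Fin n) → ℝ) (s t : ℕ) (hst : s + t + 1 ≤ r)
    (hn : 3 * r ≤ n) (hr : 0 < r) :
    N r f s (t+1) ≤ (3 / (n:ℝ)) * N r f (s+1) t + (r:ℝ) * N r f s t := by
  classical
  have hn0 : (0:ℝ) < n := by
    have : 0 < n := by omega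
    exact_mod_cast this
  have hcoef : ((n:ℝ)/3) ≤ (n:ℝ) - 2*s - t := by
    have h1 : 2*s + t ≤ 2*r := by omega
    have h2 : (3:ℝ) * r ≤ n := by exact_mod_cast hn
    have : (2*s + t : ℝ) ≤ 2*r := by exact_mod_cast h1
    push_cast at this ⊢
    linarith
  have hcoefpos : (0:ℝ) < (n:ℝ) - 2*s - t := lt_of_lt_of_le (by linarith) hcoef
  -- the main counting inequality
  have main : ((t:ℝ)+1) * (((n:ℝ) - 2*s - t)) * N r f s (t+1) ≤
      N r f (s+1) t + ((r:ℝ) - s - t) * (((n:ℝ) - 2*s - t)) * N r f s t := by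
    -- T1 : configs with chosen b ∈ V
    have hT1 : ((t:ℝ)+1) * N r f s (t+1) =
        ∑ p ∈ cfg n s (t+1), ∑ b ∈ p.2, |M r f s p.1 p.2| := by
      rw [N, Finset.mul_sum]
      refine Finset.sum_congr rfl fun p hp => ?_
      rw [Finset.sum_const, nsmul_eq_mul, (mem_cfg.1 hp).2.1]
      push_cast
      ring
    -- pointwise inequality
    have hpoint : ∀ p ∈ cfg n s (t+1), ∀ b ∈ p.2,
        ((n:ℝ) - 2*s - t) * |M r f s p.1 p.2| ≤
          (∑ a ∈ Finset.univ \ (Finset.image p.1 Finset.univ ∪ (p.2.erase b) ∪ {b}),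
            |M r f (s+1) (ext p.1 a b) (p.2.erase b)|)
          + ((r:ℝ) - s - t) * |M r f s p.1 (p.2.erase b)| := by
      rintro ⟨x, V1⟩ hp b hb
      obtain ⟨hx, hV1card, hxV1⟩ := mem_cfg.1 hp
      simp only at hx hV1card hxV1 hb ⊢
      set V0 := V1.erase b with hV0
      have hbV0 : b ∉ V0 := Finset.notMem_erase _ _
      have hV0card : V0.card = t := by
        rw [hV0, Finset.card_erase_of_mem hb, hV1card]
        omega
      have hbX : ∀ q, x q ≠ b := fun q hq => hxV1 q (hq ▸ hb)
      have hxV0 : ∀ q, x q ∉ V0 := fun q hq => hxV1 q (Finset.erase_subset _ _ hq)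
      have hkey := key r f hx hbX hbV0 hxV0
      rw [hV0card] at hkey
      have hins : insert b V0 = V1 := Finset.insert_erase hb
      rw [hins] at hkey
      have hid : ((n:ℝ) - 2*s - t) * M r f s x V1 =
          (∑ a ∈ Finset.univ \ (Finset.image x Finset.univ ∪ V0 ∪ {b}),
            M r f (s+1) (ext x a b) V0) + ((r:ℝ) - s - t) * M r f s x V0 := by
        rw [hkey]; ring
      calc ((n:ℝ) - 2*s - t) * |M r f s x V1| = |((n:ℝ) - 2*s - t) * M r f s x V1| := by
            rw [abs_mul, abs_of_nonneg hcoefpos.le]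
        _ = |(∑ a ∈ Finset.univ \ (Finset.image x Finset.univ ∪ V0 ∪ {b}),
              M r f (s+1) (ext x a b) V0) + ((r:ℝ) - s - t) * M r f s x V0| := by rw [hid]
        _ ≤ |∑ a ∈ Finset.univ \ (Finset.image x Finset.univ ∪ V0 ∪ {b}),
              M r f (s+1) (ext x a b) V0| + |((r:ℝ) - s - t) * M r f s x V0| := abs_add_le _ _
        _ ≤ (∑ a ∈ Finset.univ \ (Finset.image x Finset.univ ∪ V0 ∪ {b}),
              |M r f (s+1) (ext x a b) V0|) + ((r:ℝ) - s - t) * |M r f s x V0| := by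
            gcongr
            · exact Finset.abs_sum_le_sum_abs _ _
            · rw [abs_mul]
              gcongr
              rw [abs_of_nonneg]
              have : (s:ℝ) + t + 1 ≤ r := by exact_mod_cast hst
              linarith
    -- reindex T1-sums to T2-sums
    have hre : ∀ g : (Fin s × Bool → Fin n) → Finset (Fin n) → Fin n → ℝ,
        (∑ p ∈ cfg n s (t+1), ∑ b ∈ p.2, g p.1 (p.2.erase b) b) =
        ∑ p ∈ cfg n s t, ∑ b ∈ Finset.univ \ (Finset.image p.1 Finset.univ ∪ p.2),
          g p.1 p.2 b := by
      intro g
      rw [Finset.sum_sigma', Finset.sum_sigma']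
      refine Finset.sum_nbij' (fun z => ⟨(z.1.1, z.1.2.erase z.2), z.2⟩)
        (fun z => ⟨(z.1.1, insert z.2 z.1.2), z.2⟩) ?_ ?_ ?_ ?_ ?_
      · rintro ⟨⟨x, V1⟩, b⟩ hz
        simp only [Finset.mem_sigma] at hz ⊢
        obtain ⟨hp, hb⟩ := hz
        obtain ⟨hx, hV1card, hxV1⟩ := mem_cfg.1 hp
        simp only at hx hV1card hxV1 hb
        refine ⟨mem_cfg.2 ⟨hx, ?_, ?_⟩, ?_⟩
        · simp only
          rw [Finset.card_erase_of_mem hb, hV1card]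
          omega
        · exact fun q hq => hxV1 q (Finset.erase_subset _ _ hq)
        · simp only [Finset.mem_sdiff, Finset.mem_univ, true_and, Finset.mem_union, not_or]
          refine ⟨?_, Finset.notMem_erase _ _⟩
          rintro hbX
          rcases Finset.mem_image.1 hbX with ⟨q, -, hq⟩
          exact hxV1 q (hq ▸ hb)
      · rintro ⟨⟨x, V0⟩, b⟩ hz
        simp only [Finset.mem_sigma] at hz ⊢
        obtain ⟨hp, hb⟩ := hz
        obtain ⟨hx, hV0card, hxV0⟩ := mem_cfg.1 hp
        simp only [Finset.mem_sdiff, Finset.mem_univ, true_and, Finset.mem_union,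
          not_or] at hb
        obtain ⟨hbX, hbV0⟩ := hb
        simp only at hx hV0card hxV0
        refine ⟨mem_cfg.2 ⟨hx, ?_, ?_⟩, ?_⟩
        · simp only
          rw [Finset.card_insert_of_notMem hbV0, hV0card]
        · intro q
          simp only [Finset.mem_insert, not_or]
          refine ⟨fun hq => hbX (Finset.mem_image.2 ⟨q, Finset.mem_univ _, hq⟩), hxV0 q⟩
        · exact Finset.mem_insert_self _ _
      · rintro ⟨⟨x, V1⟩, b⟩ hz
        simp only [Finset.mem_sigma] at hz
        have : insert b (V1.erase b) = V1 := Finset.insert_erase hz.2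
        simp [this]
      · rintro ⟨⟨x, V0⟩, b⟩ hz
        simp only [Finset.mem_sigma] at hz
        obtain ⟨-, hb⟩ := hz
        simp only [Finset.mem_sdiff, Finset.mem_univ, true_and, Finset.mem_union,
          not_or] at hb
        have : (insert b V0).erase b = V0 := Finset.erase_insert hb.2
        simp [this]
      · rintro ⟨⟨x, V1⟩, b⟩ hz
        simp
    -- T3 to cfg (s+1) t
    have hT3 : (∑ p ∈ cfg n s t, ∑ b ∈ Finset.univ \ (Finset.image p.1 Finset.univ ∪ p.2),
          ∑ a ∈ Finset.univ \ (Finset.image p.1 Finset.univ ∪ p.2 ∪ {b}),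
            |M r f (s+1) (ext p.1 a b) p.2|)
        = N r f (s+1) t := by
      rw [N, Finset.sum_sigma', Finset.sum_sigma']
      refine Finset.sum_nbij' (fun z => (ext z.1.1.1 z.2 z.1.2, z.1.1.2))
        (fun p => ⟨⟨((fun q : Fin s × Bool => p.1 (q.1.succ, q.2)), p.2), p.1 (0, true)⟩,
          p.1 (0, false)⟩) ?_ ?_ ?_ ?_ ?_
      · rintro ⟨⟨⟨x, V0⟩, b⟩, a⟩ hz
        simp only [Finset.mem_sigma] at hz
        obtain ⟨⟨hp, hb⟩, ha⟩ := hz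
        obtain ⟨hx, hV0card, hxV0⟩ := mem_cfg.1 hp
        simp only at hx hV0card hxV0
        simp only [Finset.mem_sdiff, Finset.mem_univ, true_and, Finset.mem_union,
          Finset.mem_singleton, not_or] at hb ha
        obtain ⟨hbX, hbV0⟩ := hb
        obtain ⟨⟨haX, haV0⟩, hab⟩ := ha
        have haX' : ∀ q, x q ≠ a := fun q hq => haX (Finset.mem_image.2 ⟨q, Finset.mem_univ _, hq⟩)
        have hbX' : ∀ q, x q ≠ b := fun q hq => hbX (Finset.mem_image.2 ⟨q, Finset.mem_univ _, hq⟩)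
        refine mem_cfg.2 ⟨ext_injective hx hab haX' hbX', hV0card, ?_⟩
        rintro ⟨i, c⟩
        simp only
        rcases Fin.eq_zero_or_eq_succ i with rfl | ⟨i', rfl⟩
        · cases c <;> simpa using (by assumption)
        · simpa using hxV0 (i', c)
      · rintro ⟨y, V0⟩ hp
        obtain ⟨hy, hV0card, hyV0⟩ := mem_cfg.1 hp
        simp only at hy hV0card hyV0
        have hxinj : Function.Injective (fun q : Fin s × Bool => y (q.1.succ, q.2)) := by
          intro q q' h
          have := hy h
          rw [Prod.ext_iff] at this
          obtain ⟨h1, h2⟩ := this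
          exact Prod.ext (Fin.succ_injective _ h1) h2
        simp only [Finset.mem_sigma]
        refine ⟨⟨mem_cfg.2 ⟨hxinj, hV0card, fun q => hyV0 _⟩, ?_⟩, ?_⟩
        · simp only [Finset.mem_sdiff, Finset.mem_univ, true_and, Finset.mem_union, not_or]
          constructor
          · intro hmem
            rcases Finset.mem_image.1 hmem with ⟨q, -, hq⟩
            have := hy hq
            simp [Prod.ext_iff] at this
          · exact hyV0 _
        · simp only [Finset.mem_sdiff, Finset.mem_univ, true_and, Finset.mem_union,
            Finset.mem_singleton, not_or]
          refine ⟨⟨?_, hyV0 _⟩, ?_⟩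
          · intro hmem
            rcases Finset.mem_image.1 hmem with ⟨q, -, hq⟩
            have := hy hq
            simp [Prod.ext_iff] at this
          · intro h
            have := hy h
            simp [Prod.ext_iff] at this
      · rintro ⟨⟨⟨x, V0⟩, b⟩, a⟩ hz
        simp
      · rintro ⟨y, V0⟩ hp
        simp [restrict_ext]
      · rintro ⟨⟨⟨x, V0⟩, b⟩, a⟩ hz
        simp
    -- T2 inner count for the N s t term
    have hT2count : (∑ p ∈ cfg n s t, ∑ b ∈ Finset.univ \ (Finset.image p.1 Finset.univ ∪ p.2),
          |M r f s p.1 p.2|) = ((n:ℝ) - 2*s - t) * N r f s t := by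
      rw [N, Finset.mul_sum]
      refine Finset.sum_congr rfl fun p hp => ?_
      obtain ⟨hx, hVcard, hxV⟩ := mem_cfg.1 hp
      rw [Finset.sum_const, nsmul_eq_mul]
      congr 1
      have hXcard : (Finset.image p.1 Finset.univ).card = 2 * s := by
        rw [Finset.card_image_of_injective _ hx]
        simp [mul_comm]
      have hdisj : Disjoint (Finset.image p.1 Finset.univ) p.2 := by
        rw [Finset.disjoint_left]
        rintro w hw hw2
        rcases Finset.mem_image.1 hw with ⟨q, -, rfl⟩
        exact hxV q hw2
      have hcard : (Finset.univ \ (Finset.image p.1 Finset.univ ∪ p.2)).card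
          = n - (2*s + t) := by
        rw [Finset.card_sdiff_of_subset (Finset.subset_univ _), Finset.card_union_of_disjoint hdisj,
          hXcard, hVcard]
        simp
      rw [hcard]
      have hle : 2*s + t ≤ n := by omega
      push_cast [hle]
      ring
    -- assemble
    calc ((t:ℝ)+1) * (((n:ℝ) - 2*s - t)) * N r f s (t+1)
        = ((n:ℝ) - 2*s - t) * (((t:ℝ)+1) * N r f s (t+1)) := by ring
      _ = ((n:ℝ) - 2*s - t) * ∑ p ∈ cfg n s (t+1), ∑ b ∈ p.2, |M r f s p.1 p.2| := by
          rw [hT1]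
      _ = ∑ p ∈ cfg n s (t+1), ∑ b ∈ p.2, ((n:ℝ) - 2*s - t) * |M r f s p.1 p.2| := by
          rw [Finset.mul_sum]
          exact Finset.sum_congr rfl fun p hp => Finset.mul_sum _ _ _
      _ ≤ ∑ p ∈ cfg n s (t+1), ∑ b ∈ p.2,
            ((∑ a ∈ Finset.univ \ (Finset.image p.1 Finset.univ ∪ (p.2.erase b) ∪ {b}),
              |M r f (s+1) (ext p.1 a b) (p.2.erase b)|)
            + ((r:ℝ) - s - t) * |M r f s p.1 (p.2.erase b)|) := by
          refine Finset.sum_le_sum fun p hp => Finset.sum_le_sum fun b hb => ?_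
          exact hpoint p hp b hb
      _ = ∑ p ∈ cfg n s t, ∑ b ∈ Finset.univ \ (Finset.image p.1 Finset.univ ∪ p.2),
            ((∑ a ∈ Finset.univ \ (Finset.image p.1 Finset.univ ∪ p.2 ∪ {b}),
              |M r f (s+1) (ext p.1 a b) p.2|)
            + ((r:ℝ) - s - t) * |M r f s p.1 p.2|) := by
          exact hre (fun x V b => (∑ a ∈ Finset.univ \ (Finset.image x Finset.univ ∪ V ∪ {b}),
            |M r f (s+1) (ext x a b) V|) + ((r:ℝ) - s - t) * |M r f s x V|)
      _ = (∑ p ∈ cfg n s t, ∑ b ∈ Finset.univ \ (Finset.image p.1 Finset.univ ∪ p.2),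
            ∑ a ∈ Finset.univ \ (Finset.image p.1 Finset.univ ∪ p.2 ∪ {b}),
              |M r f (s+1) (ext p.1 a b) p.2|)
          + ∑ p ∈ cfg n s t, ∑ b ∈ Finset.univ \ (Finset.image p.1 Finset.univ ∪ p.2),
              ((r:ℝ) - s - t) * |M r f s p.1 p.2| := by
          rw [← Finset.sum_add_distrib]
          exact Finset.sum_congr rfl fun p hp => Finset.sum_add_distrib
      _ = N r f (s+1) t + ((r:ℝ) - s - t) * (((n:ℝ) - 2*s - t)) * N r f s t := by
          rw [hT3]
          congr 1
          have : ∀ p ∈ cfg n s t,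
              (∑ b ∈ Finset.univ \ (Finset.image p.1 Finset.univ ∪ p.2),
                ((r:ℝ) - s - t) * |M r f s p.1 p.2|)
              = ((r:ℝ) - s - t) * ∑ b ∈ Finset.univ \ (Finset.image p.1 Finset.univ ∪ p.2),
                |M r f s p.1 p.2| := fun p hp => (Finset.mul_sum _ _ _).symm
          rw [Finset.sum_congr rfl this, ← Finset.mul_sum, hT2count]
          ring
  -- now divide
  have hrst : (0:ℝ) ≤ (r:ℝ) - s - t := by
    have : (s:ℝ) + t + 1 ≤ r := by exact_mod_cast hst
    linarith
  have hden : (0:ℝ) < ((t:ℝ)+1) * (((n:ℝ) - 2*s - t)) := by positivity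
  have hexp : N r f s (t+1) ≤
      (N r f (s+1) t + ((r:ℝ) - s - t) * (((n:ℝ) - 2*s - t)) * N r f s t)
        / (((t:ℝ)+1) * (((n:ℝ) - 2*s - t))) := by
    rw [le_div_iff₀ hden]
    nlinarith [main]
  refine le_trans hexp ?_
  rw [div_le_iff₀ hden]
  have e1 : (1:ℝ) ≤ (3/(n:ℝ)) * (((t:ℝ)+1) * ((n:ℝ) - 2*s - t)) := by
    rw [show (3/(n:ℝ)) * (((t:ℝ)+1) * ((n:ℝ) - 2*s - t))
      = (((t:ℝ)+1) * (((n:ℝ) - 2*s - t) * 3)) / n by ring, le_div_iff₀ hn0]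
    have h3 : (n:ℝ) ≤ ((n:ℝ) - 2*s - t) * 3 := by linarith
    nlinarith
  have e2 : ((r:ℝ) - s - t) * ((n:ℝ) - 2*s - t) ≤ (r:ℝ) * (((t:ℝ)+1) * ((n:ℝ) - 2*s - t)) := by
    have hr0 : (0:ℝ) ≤ (r:ℝ) := by positivity
    have hst0 : (0:ℝ) ≤ (s:ℝ) + t := by positivity
    have ht0 : (0:ℝ) ≤ (t:ℝ) := by positivity
    have step1 : ((r:ℝ) - s - t) * ((n:ℝ) - 2*s - t) ≤ (r:ℝ) * ((n:ℝ) - 2*s - t) :=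
      mul_le_mul_of_nonneg_right (by linarith) hcoefpos.le
    have step2 : (0:ℝ) ≤ (r:ℝ) * ((t:ℝ) * ((n:ℝ) - 2*s - t)) :=
      mul_nonneg hr0 (mul_nonneg ht0 hcoefpos.le)
    nlinarith [step1, step2]
  have b1 := mul_le_mul_of_nonneg_right e1 (N_nonneg r f (s+1) t)
  have b2 := mul_le_mul_of_nonneg_right e2 (N_nonneg r f s t)
  rw [one_mul] at b1
  nlinarith [b1, b2]


lemma M_const (r : ℕ) (c : ℝ) {s : ℕ} (hs : 0 < s) {x : Fin s × Bool → Fin n}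
    (hx : Function.Injective x) :
    M r (fun _ => c) s x ∅ = 0 := by
  classical
  set i0 : Fin s := ⟨0, hs⟩ with hi0
  set u := x (i0, false) with hu
  set v := x (i0, true) with hv
  have hpairne : ∀ i : Fin s, x (i, false) ≠ x (i, true) := by
    intro i h
    have := hx h
    simp [Prod.ext_iff] at this
  have huv : u ≠ v := hpairne i0
  have hne_u : ∀ i c', x (i, c') = u → (i, c') = (i0, false) := fun i c' h => hx h
  have hne_v : ∀ i c', x (i, c') = v → (i, c') = (i0, true) := fun i c' h => hx h
  rw [M]
  refine Finset.sum_involution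
    (fun W hW => if u ∈ W then insert v (W.erase u) else insert u (W.erase v)) ?_ ?_ ?_ ?_
  · -- sum of pairs is zero
    intro W hW
    beta_reduce
    simp only [Finset.mem_filter, Finset.mem_powersetCard] at hW
    obtain ⟨⟨-, hWr⟩, hpairs, -⟩ := hW
    have hi0p := hpairs i0
    rw [pair_filter_card huv] at hi0p
    by_cases huW : u ∈ W
    · have hvW : v ∉ W := by
        by_contra hvW
        rw [if_pos huW, if_pos hvW] at hi0p
        omega
      rw [if_pos huW]
      have hfilt : (insert v (W.erase u)).filter (fun w => ∃ i : Fin s, w = x (i, false))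
          = (W.filter (fun w => ∃ i : Fin s, w = x (i, false))).erase u := by
        ext w
        simp only [Finset.mem_filter, Finset.mem_insert, Finset.mem_erase]
        constructor
        · rintro ⟨rfl | ⟨hwu, hwW⟩, hP⟩
          · exfalso
            obtain ⟨i, hi⟩ := hP
            have := hne_v i false hi.symm
            simp [Prod.ext_iff] at this
          · exact ⟨hwu, hwW, hP⟩
        · rintro ⟨hwu, hwW, hP⟩
          exact ⟨Or.inr ⟨hwu, hwW⟩, hP⟩
      have huP : u ∈ W.filter (fun w => ∃ i : Fin s, w = x (i, false)) :=
        Finset.mem_filter.2 ⟨huW, ⟨i0, hu⟩⟩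
      have hcard := Finset.card_erase_of_mem huP
      rw [hfilt, hcard]
      have hpos : 0 < (W.filter (fun w => ∃ i : Fin s, w = x (i, false))).card :=
        Finset.card_pos.2 ⟨u, huP⟩
      have hrw : ((-1:ℝ)) ^ (W.filter (fun w => ∃ i : Fin s, w = x (i, false))).card
          = ((-1:ℝ)) ^ ((W.filter (fun w => ∃ i : Fin s, w = x (i, false))).card - 1) * (-1) := by
        conv_lhs => rw [show (W.filter (fun w => ∃ i : Fin s, w = x (i, false))).card
          = ((W.filter (fun w => ∃ i : Fin s, w = x (i, false))).card - 1) + 1 by omega]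
        rw [pow_succ]
      rw [hrw]
      ring
    · rw [if_neg huW]
      have hvW : v ∈ W := by
        by_contra hvW
        rw [if_neg huW, if_neg hvW] at hi0p
        omega
      have hfilt : (insert u (W.erase v)).filter (fun w => ∃ i : Fin s, w = x (i, false))
          = insert u (W.filter (fun w => ∃ i : Fin s, w = x (i, false))) := by
        ext w
        simp only [Finset.mem_filter, Finset.mem_insert, Finset.mem_erase]
        constructor
        · rintro ⟨rfl | ⟨hwv, hwW⟩, hP⟩
          · exact Or.inl rfl
          · exact Or.inr ⟨hwW, hP⟩
        · rintro (rfl | ⟨hwW, hP⟩)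
          · exact ⟨Or.inl rfl, ⟨i0, hu⟩⟩
          · refine ⟨Or.inr ⟨?_, hwW⟩, hP⟩
            rintro rfl
            obtain ⟨i, hi⟩ := hP
            have := hne_v i false hi.symm
            simp [Prod.ext_iff] at this
      have huP : u ∉ W.filter (fun w => ∃ i : Fin s, w = x (i, false)) :=
        fun h => huW (Finset.mem_filter.1 h).1
      rw [hfilt, Finset.card_insert_of_notMem huP, pow_succ]
      ring
  · -- sigma W ≠ W when term nonzero
    intro W hW hf
    beta_reduce
    simp only [Finset.mem_filter, Finset.mem_powersetCard] at hW
    obtain ⟨⟨-, hWr⟩, hpairs, -⟩ := hW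
    by_cases huW : u ∈ W
    · rw [if_pos huW]
      intro heq
      have : u ∈ insert v (W.erase u) := heq.symm ▸ huW
      simp only [Finset.mem_insert, Finset.mem_erase] at this
      rcases this with h | h
      · exact huv h
      · exact h.1 rfl
    · rw [if_neg huW]
      intro heq
      have : u ∈ W := heq ▸ Finset.mem_insert_self u _
      exact huW this
  · -- membership
    intro W hW
    beta_reduce
    simp only [Finset.mem_filter, Finset.mem_powersetCard] at hW ⊢
    obtain ⟨⟨-, hWr⟩, hpairs, -⟩ := hW
    have hi0p := hpairs i0
    rw [pair_filter_card huv] at hi0p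
    by_cases huW : u ∈ W
    · have hvW : v ∉ W := by
        by_contra hvW
        rw [if_pos huW, if_pos hvW] at hi0p
        omega
      rw [if_pos huW]
      have hvWe : v ∉ W.erase u := fun h => hvW (Finset.mem_of_mem_erase h)
      refine ⟨⟨Finset.subset_univ _, ?_⟩, ?_, Finset.empty_subset _⟩
      · rw [Finset.card_insert_of_notMem hvWe, Finset.card_erase_of_mem huW, hWr]
        have : 1 ≤ r := by
          rw [← hWr]
          exact Finset.card_pos.2 ⟨u, huW⟩
        omega
      · intro i
        have hip := hpairs i
        rw [pair_filter_card (hpairne i)] at hip ⊢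
        by_cases hii : i = i0
        · subst hii
          have h1 : x (i0, false) ∉ insert v (W.erase u) := by
            simp only [Finset.mem_insert, Finset.mem_erase, ← hu]
            push_neg
            exact ⟨huv, fun h => absurd rfl h⟩
          have h2 : x (i0, true) ∈ insert v (W.erase u) := Finset.mem_insert_self _ _
          rw [if_neg h1, if_pos h2]
        · have hf1 : x (i, false) ≠ u := fun h => hii (by
            have := hne_u i false h
            simp [Prod.ext_iff] at this
            exact this)
          have hf2 : x (i, false) ≠ v := fun h => (by
            have := hne_v i false h
            simp [Prod.ext_iff] at this)
          have ht1 : x (i, true) ≠ u := fun h => (by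
            have := hne_u i true h
            simp [Prod.ext_iff] at this)
          have ht2 : x (i, true) ≠ v := fun h => hii (by
            have := hne_v i true h
            simp [Prod.ext_iff] at this
            exact this)
          have m1 : (x (i, false) ∈ insert v (W.erase u)) ↔ x (i, false) ∈ W := by
            simp [Finset.mem_insert, Finset.mem_erase, hf1, hf2]
          have m2 : (x (i, true) ∈ insert v (W.erase u)) ↔ x (i, true) ∈ W := by
            simp [Finset.mem_insert, Finset.mem_erase, ht1, ht2]
          rw [if_congr m1 rfl rfl, if_congr m2 rfl rfl]
          exact hip
    · have hvW : v ∈ W := by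
        by_contra hvW
        rw [if_neg huW, if_neg hvW] at hi0p
        omega
      rw [if_neg huW]
      have huWe : u ∉ W.erase v := fun h => huW (Finset.mem_of_mem_erase h)
      refine ⟨⟨Finset.subset_univ _, ?_⟩, ?_, Finset.empty_subset _⟩
      · rw [Finset.card_insert_of_notMem huWe, Finset.card_erase_of_mem hvW, hWr]
        have : 1 ≤ r := by
          rw [← hWr]
          exact Finset.card_pos.2 ⟨v, hvW⟩
        omega
      · intro i
        have hip := hpairs i
        rw [pair_filter_card (hpairne i)] at hip ⊢
        by_cases hii : i = i0
        · subst hii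
          have h1 : x (i0, true) ∉ insert u (W.erase v) := by
            simp only [Finset.mem_insert, Finset.mem_erase, ← hv]
            push_neg
            exact ⟨fun h => huv h.symm, fun h => absurd rfl h⟩
          have h2 : x (i0, false) ∈ insert u (W.erase v) := Finset.mem_insert_self _ _
          rw [if_neg h1, if_pos h2]
        · have hf1 : x (i, false) ≠ u := fun h => hii (by
            have := hne_u i false h
            simp [Prod.ext_iff] at this
            exact this)
          have hf2 : x (i, false) ≠ v := fun h => (by
            have := hne_v i false h
            simp [Prod.ext_iff] at this)
          have ht1 : x (i, true) ≠ u := fun h => (by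
            have := hne_u i true h
            simp [Prod.ext_iff] at this)
          have ht2 : x (i, true) ≠ v := fun h => hii (by
            have := hne_v i true h
            simp [Prod.ext_iff] at this
            exact this)
          have m1 : (x (i, false) ∈ insert u (W.erase v)) ↔ x (i, false) ∈ W := by
            simp [Finset.mem_insert, Finset.mem_erase, hf1, hf2]
          have m2 : (x (i, true) ∈ insert u (W.erase v)) ↔ x (i, true) ∈ W := by
            simp [Finset.mem_insert, Finset.mem_erase, ht1, ht2]
          rw [if_congr m1 rfl rfl, if_congr m2 rfl rfl]
          exact hip
  · -- involution
    intro W hW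
    beta_reduce
    simp only [Finset.mem_filter, Finset.mem_powersetCard] at hW
    obtain ⟨⟨-, hWr⟩, hpairs, -⟩ := hW
    have hi0p := hpairs i0
    rw [pair_filter_card huv] at hi0p
    by_cases huW : u ∈ W
    · have hvW : v ∉ W := by
        by_contra hvW
        rw [if_pos huW, if_pos hvW] at hi0p
        omega
      have h1 : u ∉ insert v (W.erase u) := by
        simp only [Finset.mem_insert, Finset.mem_erase]
        push_neg
        exact ⟨huv, fun h => absurd rfl h⟩
      simp only [if_pos huW, if_neg h1]
      rw [Finset.erase_insert (fun h => hvW (Finset.mem_of_mem_erase h)),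
        Finset.insert_erase huW]
    · have hvW : v ∈ W := by
        by_contra hvW
        rw [if_neg huW, if_neg hvW] at hi0p
        omega
      have h1 : u ∈ insert u (W.erase v) := Finset.mem_insert_self _ _
      simp only [if_neg huW, if_pos h1]
      rw [Finset.erase_insert (fun h => huW (Finset.mem_of_mem_erase h)),
        Finset.insert_erase hvW]


lemma stepC (r : ℕ) (f : Finset (Fin n) → ℝ) (hn : 3 * r ≤ n) (hr : 0 < r) :
    ∀ t, ∀ s, s + t ≤ r →
      N r f s t ≤ ((r:ℝ)+1)^t * ∑ j ∈ Finset.range (t+1), (3/(n:ℝ))^j * N r f (s+j) 0 := by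
  intro t
  induction t with
  | zero =>
    intro s hs
    simp
  | succ t ih =>
    intro s hst1
    have h1 : s + t + 1 ≤ r := by omega
    have hB := stepB r f s t h1 hn hr
    have ih1 := ih (s+1) (by omega)
    have ih0 := ih s (by omega)
    set S1 := ∑ j ∈ Finset.range (t+1), (3/(n:ℝ))^j * N r f (s+1+j) 0 with hS1
    set S0 := ∑ j ∈ Finset.range (t+1), (3/(n:ℝ))^j * N r f (s+j) 0 with hS0
    set T := ∑ j ∈ Finset.range (t+2), (3/(n:ℝ))^j * N r f (s+j) 0 with hT
    have hTnn : 0 ≤ T := by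
      rw [hT]
      refine Finset.sum_nonneg fun j hj => ?_
      have hn0 : (0:ℝ) ≤ 3/(n:ℝ) := by positivity
      exact mul_nonneg (pow_nonneg hn0 j) (N_nonneg r f (s+j) 0)
    have hS1T : (3/(n:ℝ)) * S1 ≤ T := by
      have heq : (3/(n:ℝ)) * S1 =
          ∑ j ∈ Finset.range (t+1), (3/(n:ℝ))^(j+1) * N r f (s+(j+1)) 0 := by
        rw [hS1, Finset.mul_sum]
        refine Finset.sum_congr rfl fun j hj => ?_
        have : s+1+j = s+(j+1) := by omega
        rw [this, pow_succ]
        ring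
      have hT' : T = (∑ j ∈ Finset.range (t+1), (3/(n:ℝ))^(j+1) * N r f (s+(j+1)) 0)
          + (3/(n:ℝ))^0 * N r f (s+0) 0 := Finset.sum_range_succ' _ _
      rw [heq, hT']
      have := N_nonneg r f (s+0) 0
      nlinarith [this]
    have hS0T : S0 ≤ T := by
      have hT2 : T = S0 + (3/(n:ℝ))^(t+1) * N r f (s+(t+1)) 0 := Finset.sum_range_succ _ _
      have hnn : (0:ℝ) ≤ (3/(n:ℝ))^(t+1) * N r f (s+(t+1)) 0 := by
        have hn0 : (0:ℝ) ≤ 3/(n:ℝ) := by positivity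
        exact mul_nonneg (pow_nonneg hn0 _) (N_nonneg r f _ 0)
      linarith
    calc N r f s (t+1) ≤ 3/(n:ℝ) * N r f (s+1) t + (r:ℝ) * N r f s t := hB
      _ ≤ 3/(n:ℝ) * (((r:ℝ)+1)^t * S1) + (r:ℝ) * (((r:ℝ)+1)^t * S0) := by
          gcongr
      _ = ((r:ℝ)+1)^t * ((3/(n:ℝ)) * S1) + ((r:ℝ) * ((r:ℝ)+1)^t) * S0 := by ring
      _ ≤ ((r:ℝ)+1)^t * T + ((r:ℝ) * ((r:ℝ)+1)^t) * T := by
          gcongr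
      _ = ((r:ℝ)+1)^(t+1) * T := by ring


/-- the unique empty pair-system -/
def x0 (n : ℕ) : Fin 0 × Bool → Fin n := fun q => q.1.elim0

lemma N_zero_left (r t : ℕ) (g : Finset (Fin n) → ℝ) :
    N r g 0 t = ∑ V ∈ (Finset.univ : Finset (Fin n)).powersetCard t, |M r g 0 (x0 n) V| := by
  rw [N]
  refine Finset.sum_nbij' (fun p => p.2) (fun V => (x0 n, V)) ?_ ?_ ?_ ?_ ?_
  · intro p hp
    rw [Finset.mem_powersetCard]
    exact ⟨Finset.subset_univ _, (mem_cfg.1 hp).2.1⟩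
  · intro V hV
    refine mem_cfg.2 ⟨fun a => a.1.elim0, (Finset.mem_powersetCard.1 hV).2, fun q => q.1.elim0⟩
  · intro p hp
    have : (x0 n) = p.1 := funext fun q => q.1.elim0
    rw [this]
  · intro V hV
    rfl
  · intro p hp
    have : p.1 = (x0 n) := funext fun q => q.1.elim0
    rw [this]

lemma M_zero_empty (r : ℕ) (g : Finset (Fin n) → ℝ) :
    M r g 0 (x0 n) ∅ = ∑ W ∈ (Finset.univ : Finset (Fin n)).powersetCard r, g W := by
  rw [M, Finset.filter_true_of_mem (fun W hW => ⟨fun i => i.elim0, Finset.empty_subset _⟩)]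
  refine Finset.sum_congr rfl fun W hW => ?_
  have : W.filter (fun w => ∃ i : Fin 0, w = (x0 n) (i, false)) = ∅ := by
    refine Finset.filter_false_of_mem fun w hw => ?_
    rintro ⟨i, -⟩
    exact i.elim0
  rw [this]
  simp

lemma N_zero_zero (r : ℕ) (g : Finset (Fin n) → ℝ) :
    N r g 0 0 = |∑ W ∈ (Finset.univ : Finset (Fin n)).powersetCard r, g W| := by
  rw [N_zero_left, Finset.powersetCard_zero, Finset.sum_singleton, M_zero_empty]

lemma M_zero_full (r : ℕ) (g : Finset (Fin n) → ℝ) {V : Finset (Fin n)}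
    (hV : V ∈ (Finset.univ : Finset (Fin n)).powersetCard r) :
    M r g 0 (x0 n) V = g V := by
  have hVr : V.card = r := (Finset.mem_powersetCard.1 hV).2
  rw [M]
  have hfilt : ((Finset.univ : Finset (Fin n)).powersetCard r).filter (fun W =>
      (∀ i : Fin 0, (W.filter (fun w => w = (x0 n) (i, false) ∨ w = (x0 n) (i, true))).card = 1)
      ∧ V ⊆ W) = {V} := by
    ext W
    simp only [Finset.mem_filter, Finset.mem_powersetCard, Finset.mem_singleton]
    constructor
    · rintro ⟨⟨-, hWr⟩, -, hVW⟩
      exact (Finset.eq_of_subset_of_card_le hVW (by omega)).symm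
    · rintro rfl
      exact ⟨⟨Finset.subset_univ _, hVr⟩, fun i => i.elim0, Finset.Subset.refl _⟩
  rw [hfilt, Finset.sum_singleton]
  have : V.filter (fun w => ∃ i : Fin 0, w = (x0 n) (i, false)) = ∅ := by
    refine Finset.filter_false_of_mem fun w hw => ?_
    rintro ⟨i, -⟩
    exact i.elim0
  rw [this]
  simp

lemma N_zero_r (r : ℕ) (g : Finset (Fin n) → ℝ) :
    N r g 0 r = ∑ V ∈ (Finset.univ : Finset (Fin n)).powersetCard r, |g V| := by
  rw [N_zero_left]
  exact Finset.sum_congr rfl fun V hV => by rw [M_zero_full r g hV]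

lemma N_s_zero (r s : ℕ) (g : Finset (Fin n) → ℝ) :
    N r g s 0 = ∑ x ∈ (Finset.univ : Finset (Fin s × Bool → Fin n)).filter Function.Injective,
      |M r g s x ∅| := by
  rw [N]
  refine Finset.sum_nbij' (fun p => p.1) (fun x => (x, ∅)) ?_ ?_ ?_ ?_ ?_
  · intro p hp
    simp only [Finset.mem_filter, Finset.mem_univ, true_and]
    exact (mem_cfg.1 hp).1
  · intro x hx
    simp only [Finset.mem_filter, Finset.mem_univ, true_and] at hx
    exact mem_cfg.2 ⟨hx, Finset.card_empty, fun q => Finset.notMem_empty _⟩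
  · intro p hp
    have : p.2 = ∅ := Finset.card_eq_zero.1 (mem_cfg.1 hp).2.1
    rw [Prod.ext_iff]
    exact ⟨rfl, this.symm⟩
  · intro x hx
    rfl
  · intro p hp
    have : p.2 = ∅ := Finset.card_eq_zero.1 (mem_cfg.1 hp).2.1
    rw [this]

lemma M_sub (r : ℕ) (f1 f2 : Finset (Fin n) → ℝ) (s : ℕ) (x : Fin s × Bool → Fin n)
    (V : Finset (Fin n)) :
    M r (fun W => f1 W - f2 W) s x V = M r f1 s x V - M r f2 s x V := by
  rw [M, M, M, ← Finset.sum_sub_distrib]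
  exact Finset.sum_congr rfl fun W hW => by ring

end BS

open BS

theorem stmt_12 (r : ℕ) (hr : 0 < r) :
    ∃ c : ℝ, 0 < c ∧ ∀ n : ℕ, 3 * r ≤ n → ∀ β : ℝ, 0 < β → β ≤ 1 / 2 →
      ∀ E : Finset (Finset (Fin n)), (∀ e ∈ E, e.card = r) →
        β * (n.choose r : ℝ) ≤ (E.card : ℝ) → (E.card : ℝ) ≤ (1 - β) * (n.choose r : ℝ) →
        ∃ s : ℕ, 1 ≤ s ∧ s ≤ r ∧
          c * β * (n : ℝ) ^ (r + s) ≤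
          ∑ x ∈ (Finset.univ : Finset (Fin s × Bool → Fin n)).filter Function.Injective,
            |∑ W ∈ ((Finset.univ : Finset (Fin n)).powersetCard r).filter (fun W =>
                ∀ i : Fin s, (W.filter (fun w => w = x (i, false) ∨ w = x (i, true))).card = 1),
              (-1 : ℝ) ^ (W.filter (fun w => ∃ i : Fin s, w = x (i, false))).card *
                (if W ∈ E then (1 : ℝ) else 0)| := by
  have hr0 : (0:ℝ) < r := by exact_mod_cast hr
  refine ⟨((2:ℝ)/(3*(r:ℝ)))^r / ((3:ℝ)^r * (r:ℝ) * ((r:ℝ)+1)^r), by positivity, ?_⟩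
  intro n hn β hβ0 hβhalf E hE hlow hup
  set c : ℝ := ((2:ℝ)/(3*(r:ℝ)))^r / ((3:ℝ)^r * (r:ℝ) * ((r:ℝ)+1)^r) with hc
  have hrn : r ≤ n := by omega
  have hn0 : 0 < n := by omega
  have hn0' : (0:ℝ) < n := by exact_mod_cast hn0
  set C : ℝ := (n.choose r : ℝ) with hC
  have hC0 : (0:ℝ) < C := by
    rw [hC]
    exact_mod_cast Nat.choose_pos hrn
  set p : ℝ := (E.card : ℝ) / C with hp
  set g : Finset (Fin n) → ℝ := fun W => (if W ∈ E then (1:ℝ) else 0) - p with hg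
  have hEP : E ⊆ (Finset.univ : Finset (Fin n)).powersetCard r := fun e he =>
    Finset.mem_powersetCard.2 ⟨Finset.subset_univ _, hE e he⟩
  have hPcard : (((Finset.univ : Finset (Fin n)).powersetCard r)).card = n.choose r := by
    simp [Finset.card_powersetCard]
  have hfiltE : ((Finset.univ : Finset (Fin n)).powersetCard r).filter (fun W => W ∈ E) = E := by
    ext W
    simp only [Finset.mem_filter]
    exact ⟨fun h => h.2, fun h => ⟨hEP h, h⟩⟩
  have hsumind : ∑ W ∈ (Finset.univ : Finset (Fin n)).powersetCard r,
      (if W ∈ E then (1:ℝ) else 0) = (E.card : ℝ) := by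
    rw [Finset.sum_boole, hfiltE]
  have hsumg : ∑ W ∈ (Finset.univ : Finset (Fin n)).powersetCard r, g W = 0 := by
    rw [hg]
    rw [Finset.sum_sub_distrib, hsumind, Finset.sum_const, hPcard, nsmul_eq_mul, hp]
    field_simp
    simp [hC]
  have hβp : β ≤ p := by
    rw [hp, le_div_iff₀ hC0]
    exact hlow
  have hp1β : p ≤ 1 - β := by
    rw [hp, div_le_iff₀ hC0]
    linarith [hup]
  have hecard : (E.card : ℝ) = p * C := by
    rw [hp]
    field_simp
  have hL1 : β * C ≤ ∑ V ∈ (Finset.univ : Finset (Fin n)).powersetCard r, |g V| := by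
    have habs : ∀ V ∈ (Finset.univ : Finset (Fin n)).powersetCard r,
        |g V| = if V ∈ E then 1 - p else p := by
      intro V hV
      rw [hg]
      beta_reduce
      by_cases hVE : V ∈ E
      · rw [if_pos hVE, if_pos hVE, abs_of_nonneg]
        linarith
      · rw [if_neg hVE, if_neg hVE, show (0:ℝ) - p = -p by ring, abs_neg, abs_of_nonneg]
        linarith
    rw [Finset.sum_congr rfl habs, Finset.sum_ite, Finset.sum_const, Finset.sum_const, hfiltE]
    have hcardE : (E.card : ℝ) ≤ C := by
      have h := Finset.card_le_card hEP
      rw [hPcard] at h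
      rw [hC]
      exact_mod_cast h
    have hfiltcard : ((((Finset.univ : Finset (Fin n)).powersetCard r).filter
        (fun V => V ∉ E)).card : ℝ) = C - E.card := by
      have := Finset.card_filter_add_card_filter_not
        (s := (Finset.univ : Finset (Fin n)).powersetCard r) (p := fun V => V ∈ E)
      rw [hfiltE, hPcard] at this
      have h2 : (((Finset.univ : Finset (Fin n)).powersetCard r).filter
          (fun V => V ∉ E)).card = n.choose r - E.card := by omega
      rw [h2, hC]
      have hle : E.card ≤ n.choose r := by omega
      push_cast [hle]
      ring
    rw [nsmul_eq_mul, nsmul_eq_mul, hfiltcard, hecard]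
    have key1 : β * (1 - β) ≤ p * (1-p) := by
      nlinarith [mul_nonneg (sub_nonneg.2 hβp) (sub_nonneg.2 hp1β)]
    have key2 : β ≤ 2 * (p * (1-p)) := by nlinarith [key1]
    have hrw : p * C * (1 - p) + (C - p * C) * p = C * (2 * (p * (1-p))) := by ring
    rw [hrw]
    calc β * C = C * β := by ring
      _ ≤ C * (2 * (p * (1-p))) := mul_le_mul_of_nonneg_left key2 hC0.le
  have hchoose : ((2:ℝ)/(3*(r:ℝ)))^r * (n:ℝ)^r ≤ C := by
    have h1 : (n - r)^r ≤ n.descFactorial r :=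
      le_trans (Nat.pow_le_pow_left (by omega) r) (Nat.pow_sub_le_descFactorial n r)
    have h2 : n.descFactorial r = r.factorial * n.choose r :=
      Nat.descFactorial_eq_factorial_mul_choose n r
    have h3 : r.factorial ≤ r^r := Nat.factorial_le_pow r
    have h4 : (n-r)^r ≤ r^r * n.choose r := by
      calc (n-r)^r ≤ r.factorial * n.choose r := h2 ▸ h1
        _ ≤ r^r * n.choose r := Nat.mul_le_mul_right _ h3
    have h5 : ((n:ℝ) - (r:ℝ))^r ≤ (r:ℝ)^r * C := by
      calc ((n:ℝ) - (r:ℝ))^r = (((n - r : ℕ)):ℝ)^r := by rw [Nat.cast_sub hrn]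
        _ ≤ ((r^r * n.choose r : ℕ) : ℝ) := by exact_mod_cast h4
        _ = (r:ℝ)^r * C := by rw [hC]; push_cast; ring
    have h6 : (2/3 : ℝ) * n ≤ (n:ℝ) - r := by
      have : (3:ℝ) * r ≤ n := by exact_mod_cast hn
      linarith
    have h7 : ((2/3:ℝ) * n)^r ≤ ((n:ℝ) - r)^r := pow_le_pow_left₀ (by positivity) h6 r
    have h8 : ((2:ℝ)/(3*(r:ℝ)))^r * (n:ℝ)^r * (r:ℝ)^r = ((2/3:ℝ) * n)^r := by
      rw [← mul_pow, ← mul_pow]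
      congr 1
      field_simp
    have h9 : ((2:ℝ)/(3*(r:ℝ)))^r * (n:ℝ)^r * (r:ℝ)^r ≤ C * (r:ℝ)^r := by
      rw [h8]
      calc ((2/3:ℝ) * n)^r ≤ ((n:ℝ) - r)^r := h7
        _ ≤ (r:ℝ)^r * C := h5
        _ = C * (r:ℝ)^r := by ring
    have hrr : (0:ℝ) < (r:ℝ)^r := by positivity
    exact le_of_mul_le_mul_right h9 hrr
  have hchain := stepC r g hn hr r 0 (by omega)
  have hN0r : β * (((2:ℝ)/(3*(r:ℝ)))^r * (n:ℝ)^r) ≤ N r g 0 r := by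
    rw [N_zero_r]
    calc β * (((2:ℝ)/(3*(r:ℝ)))^r * (n:ℝ)^r) ≤ β * C :=
          mul_le_mul_of_nonneg_left hchoose hβ0.le
      _ ≤ _ := hL1
  have hN00 : N r g 0 0 = 0 := by rw [N_zero_zero, hsumg, abs_zero]
  have hsplit : ∑ j ∈ Finset.range (r+1), (3/(n:ℝ))^j * N r g (0+j) 0
      = ∑ j ∈ Finset.Icc 1 r, (3/(n:ℝ))^j * N r g j 0 := by
    have h0 : (Finset.range (r+1)).erase 0 = Finset.Icc 1 r := by
      ext j
      simp only [Finset.mem_erase, Finset.mem_range, Finset.mem_Icc]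
      omega
    rw [← Finset.sum_erase_add (Finset.range (r+1)) _ (Finset.mem_range.2 (Nat.succ_pos r))]
    rw [h0]
    simp only [Nat.zero_add, pow_zero, one_mul, hN00, add_zero]
  set K : ℝ := ((r:ℝ)+1)^r with hK
  have hK0 : (0:ℝ) < K := by positivity
  set X : ℝ := β * (((2:ℝ)/(3*(r:ℝ)))^r * (n:ℝ)^r) with hX
  have hmain : X ≤ K * ∑ j ∈ Finset.Icc 1 r, (3/(n:ℝ))^j * N r g j 0 := by
    calc X ≤ N r g 0 r := hN0r
      _ ≤ K * ∑ j ∈ Finset.range (r+1), (3/(n:ℝ))^j * N r g (0+j) 0 := hchain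
      _ = K * ∑ j ∈ Finset.Icc 1 r, (3/(n:ℝ))^j * N r g j 0 := by rw [hsplit]
  have hexists : ∃ j ∈ Finset.Icc 1 r, X / r ≤ K * ((3/(n:ℝ))^j * N r g j 0) := by
    apply Finset.exists_le_of_sum_le (Finset.nonempty_Icc.2 hr)
    calc ∑ _j ∈ Finset.Icc 1 r, X / r = (r:ℝ) * (X/r) := by
          rw [Finset.sum_const, Nat.card_Icc, nsmul_eq_mul]
          norm_num
      _ = X := by field_simp
      _ ≤ K * ∑ j ∈ Finset.Icc 1 r, (3/(n:ℝ))^j * N r g j 0 := hmain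
      _ = ∑ j ∈ Finset.Icc 1 r, K * ((3/(n:ℝ))^j * N r g j 0) := Finset.mul_sum _ _ _
  obtain ⟨j, hjmem, hj⟩ := hexists
  rw [Finset.mem_Icc] at hjmem
  refine ⟨j, hjmem.1, hjmem.2, ?_⟩
  -- identification of N r g j 0 with the statement's sum
  have hQ : N r g j 0 = ∑ x ∈ (Finset.univ : Finset (Fin j × Bool → Fin n)).filter
      Function.Injective,
      |∑ W ∈ ((Finset.univ : Finset (Fin n)).powersetCard r).filter (fun W =>
          ∀ i : Fin j, (W.filter (fun w => w = x (i, false) ∨ w = x (i, true))).card = 1),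
        (-1 : ℝ) ^ (W.filter (fun w => ∃ i : Fin j, w = x (i, false))).card *
          (if W ∈ E then (1 : ℝ) else 0)| := by
    rw [N_s_zero]
    refine Finset.sum_congr rfl fun x hx => ?_
    have hxinj : Function.Injective x := (Finset.mem_filter.1 hx).2
    congr 1
    have hsub : M r g j x ∅ = M r (fun W => if W ∈ E then (1:ℝ) else 0) j x ∅
        - M r (fun _ => p) j x ∅ :=
      M_sub r (fun W => if W ∈ E then (1:ℝ) else 0) (fun _ => p) j x ∅
    rw [hg] at hsub ⊢
    rw [hsub, M_const r p hjmem.1 hxinj, sub_zero, M]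
    congr 1
    refine Finset.filter_congr fun W hW => ?_
    simp [Finset.empty_subset]
  rw [← hQ]
  -- final algebra
  set Nj : ℝ := N r g j 0 with hNjdef
  have hNj : 0 ≤ Nj := N_nonneg r g j 0
  have h1' : X ≤ K * ((3/(n:ℝ))^j * Nj) * r := by
    rw [div_le_iff₀ hr0] at hj
    exact hj
  have hcancel : (3/(n:ℝ))^j * (n:ℝ)^j = 3^j := by
    rw [div_pow, div_mul_cancel₀]
    positivity
  have e0 : X * (n:ℝ)^j ≤ (r:ℝ) * K * 3^j * Nj := by
    calc X * (n:ℝ)^j ≤ (K * ((3/(n:ℝ))^j * Nj) * r) * (n:ℝ)^j :=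
          mul_le_mul_of_nonneg_right h1' (by positivity)
      _ = (r:ℝ) * K * Nj * ((3/(n:ℝ))^j * (n:ℝ)^j) := by ring
      _ = (r:ℝ) * K * 3^j * Nj := by rw [hcancel]; ring
  have h3jr : (3:ℝ)^j ≤ 3^r := pow_le_pow_right₀ (by norm_num) hjmem.2
  have e1 : X * (n:ℝ)^j ≤ (r:ℝ) * K * 3^r * Nj := by
    nlinarith [mul_nonneg (mul_nonneg (mul_nonneg hr0.le hK0.le)
      (sub_nonneg.2 h3jr)) hNj]
  have hgoal : c * β * (n:ℝ)^(r+j) = X * (n:ℝ)^j / ((3:ℝ)^r * (r:ℝ) * K) := by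
    rw [hc, hX, hK, pow_add]
    ring
  rw [hgoal, div_le_iff₀ (by positivity)]
  nlinarith [e1]
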